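/- For every a with 1 ≤ a ≤ 2^n − 1, the pairs (a, a), (a, a+1) (when a+1 ≤ 2^n) and (a, a−1) are fit: there exist g_1, g_2 ∈ Aut(Q_n) such that g_1(I_a) ∪ g_2(I_b) = I_{a+b}, for b ∈ {a−1, a, a+1} with a + b ≤ 2^n. -/

import Mathlib

/-- The hypercube graph on `{0,1}^n`: two strings adjacent iff they differ in one coordinate. -/
def hypercube (n : ℕ) : SimpleGraph (Fin n → Bool) where
  Adj x y := (Finset.univ.filter (fun i => x i ≠ y i)).card = 1
  symm := by constructor; intro x y h; simpa [ne_comm] using h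
  loopless := by constructor; intro x h; simp at h

/-- The integer represented by a string, position 0 most significant. -/
def bval {n : ℕ} (x : Fin n → Bool) : ℕ :=
  ∑ i : Fin n, if x i then 2 ^ (n - 1 - i.val) else 0

/-- The initial segment of length `a` in the binary order on `{0,1}^n`. -/
def initSeg (n a : ℕ) : Finset (Fin n → Bool) :=
  Finset.univ.filter (fun x => bval x < a)

/-- `m_j(S)`: number of elements of `S` with a `1` in coordinate `j`. -/
def mCount {n : ℕ} (S : Finset (Fin n → Bool)) (j : Fin n) : ℕ :=
  (S.filter (fun x => x j = true)).card

/-- The hyperface `F_{j,k}` of strings whose `j`-th coordinate equals `k`. -/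
def face (n : ℕ) (j : Fin n) (k : Bool) : Finset (Fin n → Bool) :=
  Finset.univ.filter (fun x => x j = k)

/-! ### Auxiliary material -/

/-- The automorphism of the hypercube given by permuting coordinates by `π`
(pulling back) and then flipping the coordinates indicated by `f`. -/
def autOf {n : ℕ} (π : Equiv.Perm (Fin n)) (f : Fin n → Bool) :
    hypercube n ≃g hypercube n where
  toFun x := fun i => xor (f i) (x (π i))
  invFun y := fun j => xor (f (π.symm j)) (y (π.symm j))
  left_inv x := by funext j; simp
  right_inv y := by funext i; simp
  map_rel_iff' := by
    intro x y
    show (Finset.univ.filter (fun i => xor (f i) (x (π i)) ≠ xor (f i) (y (π i)))).card = 1 ↔ _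
    have h1 : (Finset.univ.filter (fun i => xor (f i) (x (π i)) ≠ xor (f i) (y (π i))))
        = Finset.univ.filter (fun i => x (π i) ≠ y (π i)) := by
      apply Finset.filter_congr
      intro i _
      cases f i <;> simp
    have h2 : (Finset.univ.filter (fun i => x (π i) ≠ y (π i))).card
        = (Finset.univ.filter (fun j => x j ≠ y j)).card := by
      refine Finset.card_bij' (fun i _ => π i) (fun j _ => π.symm j) ?_ ?_ ?_ ?_ <;>
        intros a ha <;> simp only [Finset.mem_filter, Finset.mem_univ, true_and] at ha ⊢ <;>
          simp [ha]
    rw [h1, h2]; rfl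

lemma bval_eq_equiv {n : ℕ} (x : Fin n → Bool) :
    bval x = (finFunctionFinEquiv (fun i => if x i.rev then (1 : Fin 2) else 0) : ℕ) := by
  rw [finFunctionFinEquiv_apply, bval]
  refine Fintype.sum_equiv Fin.revPerm _ _ (fun i => ?_)
  simp only [Fin.revPerm_apply, Fin.rev_rev, Fin.val_rev]
  cases x i <;> simp [Nat.sub_sub, Nat.add_comm]

lemma bval_lt {n : ℕ} (x : Fin n → Bool) : bval x < 2 ^ n := by
  rw [bval_eq_equiv]; exact (finFunctionFinEquiv _).isLt

lemma bval_injective {n : ℕ} : Function.Injective (bval (n := n)) := by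
  intro x y h
  rw [bval_eq_equiv, bval_eq_equiv] at h
  have h2 := finFunctionFinEquiv.injective (Fin.val_injective h)
  funext j
  have := congrFun h2 j.rev
  simp only [Fin.rev_rev] at this
  cases hx : x j <;> cases hy : y j <;> simp [hx, hy] at this ⊢

lemma bval_surjective {n v : ℕ} (hv : v < 2 ^ n) : ∃ x : Fin n → Bool, bval x = v := by
  set f := finFunctionFinEquiv.symm (⟨v, hv⟩ : Fin (2 ^ n)) with hf
  refine ⟨fun j => f j.rev = 1, ?_⟩
  rw [bval_eq_equiv]
  rw [show (fun i : Fin n => if (decide (f i.rev.rev = 1)) = true then (1:Fin 2) else 0) = f from by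
    funext i; simp only [Fin.rev_rev]; match h : f i with | 0 => simp | 1 => simp]
  simp [hf]

lemma bval_succ {n : ℕ} (x : Fin (n+1) → Bool) :
    bval x = (if x 0 then 2 ^ n else 0)
      + ∑ i : Fin n, (if x i.succ then 2 ^ (n - 1 - i.val) else 0) := by
  rw [bval, Fin.sum_univ_succ]
  have h1 : (if x 0 then 2 ^ (n + 1 - 1 - ((0 : Fin (n+1)) : ℕ)) else 0)
      = (if x 0 then 2 ^ n else 0) := by norm_num
  rw [h1]
  congr 1
  refine Finset.sum_congr rfl (fun i _ => ?_)
  have hv : (i.succ : ℕ) = i.val + 1 := rfl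
  have he : n + 1 - 1 - (i.succ : ℕ) = n - 1 - i.val := by omega
  rw [he]

lemma top_false_of_bval_lt {n : ℕ} (x : Fin (n+1) → Bool) (h : bval x < 2 ^ n) :
    x 0 = false := by
  by_contra hx
  rw [Bool.not_eq_false] at hx
  rw [bval_succ, hx, if_pos rfl] at h
  omega

lemma bval_shift {n : ℕ} (e : Bool) (x : Fin (n+1) → Bool) (h0 : x 0 = false) :
    bval (fun i => xor (e && decide (i = Fin.last n)) (x (i + 1)))
      = 2 * bval x + (if e then 1 else 0) := by
  have hRHS : bval x = ∑ i : Fin n, (if x i.succ then 2 ^ (n - 1 - i.val) else 0) := by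
    rw [bval_succ, h0]; simp
  rw [bval, Fin.sum_univ_castSucc, hRHS]
  have hsucc : ∀ i : Fin n, i.castSucc + 1 = i.succ := by
    intro i
    refine Fin.ext ?_
    rw [Fin.val_add_one_of_lt (Fin.castSucc_lt_last i)]
    simp
  have hterm : ∀ i : Fin n,
      (if xor (e && decide (i.castSucc = Fin.last n)) (x (i.castSucc + 1)) then
        2 ^ (n + 1 - 1 - (i.castSucc : ℕ)) else 0)
      = 2 * (if x i.succ then 2 ^ (n - 1 - i.val) else 0) := by
    intro i
    have hlast : (decide (i.castSucc = Fin.last n)) = false := by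
      simp [Fin.ext_iff]
      omega
    rw [hsucc i, hlast]
    simp only [Bool.and_false, Bool.false_xor]
    have hexp : 2 ^ (n + 1 - 1 - (i.castSucc : ℕ)) = 2 * 2 ^ (n - 1 - i.val) := by
      have h1 : n + 1 - 1 - (i.castSucc : ℕ) = (n - 1 - i.val) + 1 := by
        have : (i.castSucc : ℕ) = i.val := rfl
        omega
      rw [h1, pow_succ, Nat.mul_comm]
    rw [hexp]
    cases x i.succ <;> simp
  rw [Finset.sum_congr rfl (fun i _ => hterm i), ← Finset.mul_sum]
  have hl : x (Fin.last n + 1) = false := by rw [Fin.last_add_one]; exact h0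
  rw [hl]
  cases e <;> simp

/-- The key construction: the "even" and "odd" doubling automorphisms split
`I_{M+m}` into an automorphic image of `I_M` and one of `I_m`, when `m ≤ M ≤ m+1`. -/
lemma key_fit {n M m : ℕ} (hm1 : 1 ≤ m) (hmM : m ≤ M) (hMm : M ≤ m + 1)
    (h2 : M + m ≤ 2 ^ (n+1)) :
    ∃ g h : hypercube (n+1) ≃g hypercube (n+1),
      (initSeg (n+1) M).image g ∪ (initSeg (n+1) m).image h = initSeg (n+1) (M+m) := by
  have hpow : 2 ^ (n+1) = 2 * 2 ^ n := by rw [pow_succ, Nat.mul_comm]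
  have hM2 : M ≤ 2 ^ n := by omega
  have hm2 : m ≤ 2 ^ n := le_trans hmM hM2
  set aut : Bool → (hypercube (n+1) ≃g hypercube (n+1)) :=
    fun e => autOf (finRotate (n+1)) (fun i => e && decide (i = Fin.last n)) with haut_def
  have haut : ∀ (e : Bool) (x : Fin (n+1) → Bool), x 0 = false →
      bval ((aut e) x) = 2 * bval x + (if e then 1 else 0) := by
    intro e x hx
    have hfun : ((aut e) x : Fin (n+1) → Bool)
        = fun i => xor (e && decide (i = Fin.last n)) (x (i + 1)) := by
      funext i
      show xor _ (x (finRotate (n+1) i)) = _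
      rw [finRotate_succ_apply]
    rw [hfun, bval_shift e x hx]
  refine ⟨aut false, aut true, ?_⟩
  ext z
  simp only [Finset.mem_union, Finset.mem_image, initSeg, Finset.mem_filter,
    Finset.mem_univ, true_and]
  constructor
  · rintro (⟨x, hx, rfl⟩ | ⟨x, hx, rfl⟩)
    · have h0 : x 0 = false := top_false_of_bval_lt x (lt_of_lt_of_le hx hM2)
      rw [haut false x h0]
      simp only [if_neg (Bool.false_ne_true)]
      omega
    · have h0 : x 0 = false := top_false_of_bval_lt x (lt_of_lt_of_le hx hm2)
      rw [haut true x h0]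
      simp only [if_true]
      omega
  · intro hz
    rcases Nat.even_or_odd (bval z) with ⟨v, hv⟩ | ⟨v, hv⟩
    · have hvM : v < M := by omega
      obtain ⟨x, hx⟩ := bval_surjective (n := n+1) (v := v) (lt_of_lt_of_le hvM (le_trans hM2 (by omega)))
      have h0 : x 0 = false := top_false_of_bval_lt x (by rw [hx]; exact lt_of_lt_of_le hvM hM2)
      refine Or.inl ⟨x, by omega, ?_⟩
      apply bval_injective
      rw [haut false x h0, hx]
      simp only [if_neg (Bool.false_ne_true)]
      omega
    · have hvm : v < m := by omega
      obtain ⟨x, hx⟩ := bval_surjective (n := n+1) (v := v) (lt_of_lt_of_le hvm (le_trans hm2 (by omega)))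
      have h0 : x 0 = false := top_false_of_bval_lt x (by rw [hx]; exact lt_of_lt_of_le hvm hm2)
      refine Or.inr ⟨x, by omega, ?_⟩
      apply bval_injective
      rw [haut true x h0, hx]
      simp only [if_true]
      omega

theorem stmt_17 (n a b : ℕ) (ha : 1 ≤ a) (hb : 1 ≤ b)
    (hab : b = a - 1 ∨ b = a ∨ b = a + 1) (hsum : a + b ≤ 2 ^ n) :
    ∃ g₁ g₂ : hypercube n ≃g hypercube n,
      (initSeg n a).image g₁ ∪ (initSeg n b).image g₂ = initSeg n (a + b) := by
  rcases n with _ | n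
  · exfalso
    simp only [pow_zero] at hsum
    omega
  rcases hab with hab | hab | hab
  · obtain ⟨g, h, hgh⟩ := key_fit (n := n) (M := a) (m := b) hb (by omega) (by omega) hsum
    exact ⟨g, h, hgh⟩
  · obtain ⟨g, h, hgh⟩ := key_fit (n := n) (M := a) (m := b) hb (by omega) (by omega) hsum
    exact ⟨g, h, hgh⟩
  · obtain ⟨g, h, hgh⟩ := key_fit (n := n) (M := b) (m := a) ha (by omega) (by omega)
      (by omega)
    refine ⟨h, g, ?_⟩
    rw [Finset.union_comm, show a + b = b + a from Nat.add_comm a b]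
    exact hgh
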